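/- Generalized Eckart–Young–Mirsky theorem: let X ∈ C^{D₁×D₂} be a t-matrix with TSVD X = U ∘ diag(λ₁,…,λ_Q) ∘ Vᴴ, Q = min(D₁,D₂), and for 1 ≤ r ≤ Q let X̂ = U ∘ diag(λ₁,…,λ_r, Z_T,…,Z_T) ∘ Vᴴ be the rank-r truncation. Then rank(X̂) ≤ r·E_T, and for every t-matrix Y ∈ C^{D₁×D₂} with rank(Y) ≤ r·E_T one has ‖X − X̂‖_F ≤ ‖X − Y‖_F in the partial order on nonnegative t-scalars. -/

import Mathlib

open scoped BigOperators
open scoped Classical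

noncomputable section

variable {N : ℕ}

/-- The underlying group `G = ZMod I₁ × ⋯ × ZMod I_N`. -/
abbrev G (I : Fin N → ℕ) : Type := ∀ n : Fin N, ZMod (I n)

/-- A t-scalar is a function `G → ℂ`. -/
abbrev TS (I : Fin N → ℕ) : Type := G I → ℂ

variable {I : Fin N → ℕ} [∀ n, NeZero (I n)]

/-- Circular convolution product of t-scalars. -/
def tconv (X Y : TS I) : TS I := fun i => ∑ j, X (i - j) * Y j

/-- The zero t-scalar. -/
def ZT : TS I := fun _ => 0

/-- The identity t-scalar: the indicator function of `0 ∈ G`. -/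
def ET : TS I := fun i => if i = 0 then 1 else 0

/-- The Fourier transform of a t-scalar:
`F(X)(i) = Σ_j X(j)·exp(2π√−1·Σ_n i_n·j_n / I_n)`. -/
def tfourier (X : TS I) : TS I :=
  fun i => ∑ j, X j * Complex.exp (2 * Real.pi * Complex.I *
      ∑ n, ((i n).val : ℂ) * ((j n).val : ℂ) / ((I n : ℕ) : ℂ))

/-- Conjugate of a t-scalar: `conj(X)(i) = complex conjugate of X(−i)`. -/
def tconj (X : TS I) : TS I := fun i => starRingEnd ℂ (X (-i))

/-- A t-scalar is self-conjugate if `X = conj(X)`. -/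
def SelfConj (X : TS I) : Prop := X = tconj X

/-- Real part `Re(X) = 2⁻¹(X + conj X)` of a t-scalar. -/
def tRe (X : TS I) : TS I := fun i => (X i + tconj X i) / 2

/-- Imaginary part `Im(X) = (2√−1)⁻¹(X − conj X)` of a t-scalar. -/
def tIm (X : TS I) : TS I := fun i => (X i - tconj X i) / (2 * Complex.I)

/-- A t-scalar is nonnegative if it is `Y ∘ Y` for some self-conjugate `Y`. -/
def TNonneg (X : TS I) : Prop := ∃ Y : TS I, SelfConj Y ∧ X = tconv Y Y

/-- A t-scalar is invertible if `X ∘ Y = E_T` for some `Y`. -/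
def TInv (X : TS I) : Prop := ∃ Y : TS I, tconv X Y = ET

/-- t-matrix multiplication: entrywise convolution products. -/
def tmul {a b c : ℕ} (A : Matrix (Fin a) (Fin b) (TS I)) (B : Matrix (Fin b) (Fin c) (TS I)) :
    Matrix (Fin a) (Fin c) (TS I) :=
  Matrix.of fun α γ => ∑ β, tconv (A α β) (B β γ)

/-- Conjugate transpose of a t-matrix. -/
def htrans {a b : ℕ} (A : Matrix (Fin a) (Fin b) (TS I)) : Matrix (Fin b) (Fin a) (TS I) :=
  Matrix.of fun β α => tconj (A α β)

/-- The identity t-matrix. -/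
def tId (Q : ℕ) : Matrix (Fin Q) (Fin Q) (TS I) :=
  Matrix.of fun α β => if α = β then ET else ZT

/-- Diagonal t-matrix with the given t-scalar diagonal entries. -/
def tdiag {Q : ℕ} (lam : Fin Q → TS I) : Matrix (Fin Q) (Fin Q) (TS I) :=
  Matrix.of fun k l => if k = l then lam k else ZT

/-- The `i`-th Fourier fslice of a t-matrix. -/
def fslice {a b : ℕ} (A : Matrix (Fin a) (Fin b) (TS I)) (i : G I) :
    Matrix (Fin a) (Fin b) ℂ :=
  Matrix.of fun α β => tfourier (A α β) i

/-- Frobenius norm of a complex matrix. -/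
def frob {a b : ℕ} (M : Matrix (Fin a) (Fin b) ℂ) : ℝ :=
  Real.sqrt (∑ α, ∑ β, Complex.normSq (M α β))


namespace EYMAux

open Complex Matrix

variable {N : ℕ} {I : Fin N → ℕ} [∀ n, NeZero (I n)]

/-- The character. -/
def chi (i j : G I) : ℂ :=
  Complex.exp (2 * Real.pi * Complex.I *
      ∑ n, ((i n).val : ℂ) * ((j n).val : ℂ) / ((I n : ℕ) : ℂ))

lemma tfourier_def (X : TS I) (i : G I) : tfourier X i = ∑ j, X j * chi i j := rfl

lemma exp_two_pi_eq (a b : ℂ) (m : ℤ) (h : a = b + m) :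
    Complex.exp (2 * Real.pi * Complex.I * a) = Complex.exp (2 * Real.pi * Complex.I * b) := by
  have h2 : 2 * (Real.pi : ℂ) * Complex.I * a
      = 2 * Real.pi * Complex.I * b + m * (2 * Real.pi * Complex.I) := by
    rw [h]; ring
  rw [h2, Complex.exp_add, Complex.exp_int_mul_two_pi_mul_I, mul_one]

lemma chi_add (i j k : G I) : chi i (j + k) = chi i j * chi i k := by
  rw [chi, chi, chi, ← Complex.exp_add]
  have h3 : 2 * (Real.pi : ℂ) * Complex.I * (∑ n, ((i n).val : ℂ) * ((j n).val : ℂ) / ((I n : ℕ) : ℂ))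
      + 2 * Real.pi * Complex.I * (∑ n, ((i n).val : ℂ) * ((k n).val : ℂ) / ((I n : ℕ) : ℂ))
      = 2 * Real.pi * Complex.I * ((∑ n, ((i n).val : ℂ) * ((j n).val : ℂ) / ((I n : ℕ) : ℂ))
          + ∑ n, ((i n).val : ℂ) * ((k n).val : ℂ) / ((I n : ℕ) : ℂ)) := by ring
  rw [h3]
  apply exp_two_pi_eq _ _
    (∑ n, -(((i n).val : ℤ) * ((((j n).val + (k n).val) / I n : ℕ) : ℤ)))
  have hm : ((∑ n, -(((i n).val : ℤ) * ((((j n).val + (k n).val) / I n : ℕ) : ℤ)) : ℤ) : ℂ)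
      = ∑ n, -(((i n).val : ℂ) * ((((j n).val + (k n).val) / I n : ℕ) : ℂ)) := by
    rw [Int.cast_sum]
    refine Finset.sum_congr rfl fun n _ => ?_
    rw [Int.cast_neg, Int.cast_mul, Int.cast_natCast, Int.cast_natCast]
  rw [hm, ← Finset.sum_add_distrib, ← Finset.sum_add_distrib]
  refine Finset.sum_congr rfl fun n _ => ?_
  have hI : ((I n : ℕ) : ℂ) ≠ 0 := Nat.cast_ne_zero.mpr (NeZero.ne _)
  have hnat : ((j n) + (k n)).val + (I n) * (((j n).val + (k n).val) / I n)
      = (j n).val + (k n).val := by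
    rw [ZMod.val_add]; exact Nat.mod_add_div _ _
  have hval : (((j n) + (k n)).val : ℂ) + (I n) * ((((j n).val + (k n).val) / I n : ℕ) : ℂ)
      = ((j n).val : ℂ) + ((k n).val : ℂ) := by exact_mod_cast congrArg (Nat.cast : ℕ → ℂ) hnat
  have h4 : (((j n) + (k n)).val : ℂ)
      = ((j n).val : ℂ) + ((k n).val : ℂ)
        - (I n) * ((((j n).val + (k n).val) / I n : ℕ) : ℂ) := by linear_combination hval
  have h5 : ((j + k) n) = (j n) + (k n) := rfl
  rw [h5, h4]
  field_simp
  ring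

lemma chi_zero (i : G I) : chi i (0 : G I) = 1 := by
  have : ∀ n : Fin N, (((0 : G I) n).val : ℂ) = 0 := by
    intro n; simp [ZMod.val_zero]
  simp [chi, this]

omit [∀ (n : Fin N), NeZero (I n)] in
lemma chi_ne_zero (i j : G I) : chi i j ≠ 0 := by
  rw [chi]; exact Complex.exp_ne_zero _

lemma chi_conj (i j : G I) : (starRingEnd ℂ) (chi i j) = chi i (-j) := by
  have h1 : chi i j * chi i (-j) = 1 := by
    rw [← chi_add]; simp [chi_zero]
  have hS : (starRingEnd ℂ) (∑ n, ((i n).val : ℂ) * ((j n).val : ℂ) / ((I n : ℕ) : ℂ))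
      = ∑ n, ((i n).val : ℂ) * ((j n).val : ℂ) / ((I n : ℕ) : ℂ) := by
    rw [map_sum]
    refine Finset.sum_congr rfl fun n _ => ?_
    rw [map_div₀, _root_.map_mul]
    simp only [map_natCast]
  have hconj : (starRingEnd ℂ) (2 * (Real.pi : ℂ) * Complex.I *
        ∑ n, ((i n).val : ℂ) * ((j n).val : ℂ) / ((I n : ℕ) : ℂ))
      = -(2 * (Real.pi : ℂ) * Complex.I *
        ∑ n, ((i n).val : ℂ) * ((j n).val : ℂ) / ((I n : ℕ) : ℂ)) := by
    rw [_root_.map_mul, _root_.map_mul, _root_.map_mul, hS, Complex.conj_I]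
    rw [Complex.conj_ofReal]
    simp only [map_ofNat]
    ring
  have h2 : chi i j * (starRingEnd ℂ) (chi i j) = 1 := by
    rw [chi, ← Complex.exp_conj, hconj, ← Complex.exp_add]
    rw [add_neg_cancel, Complex.exp_zero]
  exact mul_left_cancel₀ (chi_ne_zero i j) (h2.trans h1.symm)

lemma tfourier_tconv (X Y : TS I) (i : G I) :
    tfourier (tconv X Y) i = tfourier X i * tfourier Y i := by
  show ∑ j, (∑ k, X (j - k) * Y k) * chi i j
      = (∑ j, X j * chi i j) * (∑ k, Y k * chi i k)
  rw [Finset.sum_mul_sum]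
  simp only [Finset.sum_mul]
  rw [Finset.sum_comm]
  conv_rhs => rw [Finset.sum_comm]
  refine Finset.sum_congr rfl fun k _ => ?_
  rw [← Equiv.sum_comp (Equiv.addRight k) (fun j => (X (j - k) * Y k) * chi i j)]
  refine Finset.sum_congr rfl fun j _ => ?_
  simp only [Equiv.coe_addRight, add_sub_cancel_right]
  rw [chi_add]
  ring

lemma tfourier_tconj (X : TS I) (i : G I) :
    tfourier (tconj X) i = (starRingEnd ℂ) (tfourier X i) := by
  show ∑ j, (starRingEnd ℂ) (X (-j)) * chi i j = _
  rw [tfourier_def, map_sum]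
  rw [← Equiv.sum_comp (Equiv.neg (G I)) (fun j => (starRingEnd ℂ) (X (-j)) * chi i j)]
  refine Finset.sum_congr rfl fun j _ => ?_
  simp only [Equiv.neg_apply, neg_neg, _root_.map_mul, chi_conj]

lemma tfourier_sum {γ : Type*} (s : Finset γ) (f : γ → TS I) (i : G I) :
    tfourier (∑ b ∈ s, f b) i = ∑ b ∈ s, tfourier (f b) i := by
  unfold tfourier
  rw [Finset.sum_comm]
  refine Finset.sum_congr rfl fun j _ => ?_
  simp [Finset.sum_apply, Finset.sum_mul]

lemma tfourier_sub (X Y : TS I) (i : G I) :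
    tfourier (X - Y) i = tfourier X i - tfourier Y i := by
  unfold tfourier
  rw [← Finset.sum_sub_distrib]
  refine Finset.sum_congr rfl fun j _ => ?_
  simp [sub_mul]

lemma tfourier_ZT (i : G I) : tfourier (ZT : TS I) i = 0 := by
  simp [tfourier, ZT]

lemma tfourier_ET (i : G I) : tfourier (ET : TS I) i = 1 := by
  rw [tfourier_def]
  unfold ET
  simp only [ite_mul, one_mul, zero_mul]
  rw [Finset.sum_ite_eq' Finset.univ (0 : G I) (fun j => chi i j)]
  simp [chi_zero]

lemma tnonneg_fourier {X : TS I} (h : TNonneg X) (i : G I) :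
    ∃ t : ℝ, 0 ≤ t ∧ tfourier X i = (t : ℂ) := by
  obtain ⟨Y, hY, rfl⟩ := h
  have h0 : tfourier Y i = (starRingEnd ℂ) (tfourier Y i) := by
    conv_lhs => rw [hY]
    exact tfourier_tconj Y i
  have hz : tfourier Y i = ((tfourier Y i).re : ℂ) :=
    (Complex.conj_eq_iff_re.mp h0.symm).symm
  refine ⟨(tfourier Y i).re ^ 2, sq_nonneg _, ?_⟩
  rw [tfourier_tconv, ← sq, Complex.ofReal_pow, ← hz]

lemma fslice_tmul {a b c : ℕ} (A : Matrix (Fin a) (Fin b) (TS I))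
    (B : Matrix (Fin b) (Fin c) (TS I)) (i : G I) :
    fslice (tmul A B) i = fslice A i * fslice B i := by
  ext α γ
  simp [fslice, tmul, Matrix.mul_apply, tfourier_sum, tfourier_tconv]

lemma fslice_htrans {a b : ℕ} (A : Matrix (Fin a) (Fin b) (TS I)) (i : G I) :
    fslice (htrans A) i = (fslice A i)ᴴ := by
  ext β α
  simp [fslice, htrans, Matrix.conjTranspose_apply, tfourier_tconj]

lemma fslice_sub {a b : ℕ} (A B : Matrix (Fin a) (Fin b) (TS I)) (i : G I) :
    fslice (A - B) i = fslice A i - fslice B i := by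
  ext α β
  simp [fslice, Matrix.sub_apply, tfourier_sub]

lemma fslice_tdiag {Q : ℕ} (lam : Fin Q → TS I) (i : G I) :
    fslice (tdiag lam) i = Matrix.diagonal (fun k => tfourier (lam k) i) := by
  ext k l
  by_cases h : k = l
  · subst h; simp [fslice, tdiag, Matrix.diagonal_apply_eq]
  · simp [fslice, tdiag, Matrix.diagonal_apply_ne _ h, h, tfourier_ZT]

lemma fslice_tId {Q : ℕ} (i : G I) :
    fslice (tId Q : Matrix (Fin Q) (Fin Q) (TS I)) i = 1 := by
  ext k l
  by_cases h : k = l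
  · subst h; simp [fslice, tId, Matrix.one_apply_eq, tfourier_ET]
  · simp [fslice, tId, Matrix.one_apply_ne h, h, tfourier_ZT]

section Matrices

open Matrix

def frobSq {a b : ℕ} (M : Matrix (Fin a) (Fin b) ℂ) : ℝ :=
  ∑ α, ∑ β, Complex.normSq (M α β)

lemma frobSq_nonneg {a b : ℕ} (M : Matrix (Fin a) (Fin b) ℂ) : 0 ≤ frobSq M :=
  Finset.sum_nonneg fun _ _ => Finset.sum_nonneg fun _ _ => Complex.normSq_nonneg _

lemma frob_eq {a b : ℕ} (M : Matrix (Fin a) (Fin b) ℂ) : frob M = Real.sqrt (frobSq M) := rfl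

lemma trace_self_re {a b : ℕ} (M : Matrix (Fin a) (Fin b) ℂ) :
    (Matrix.trace (Mᴴ * M)).re = frobSq M := by
  rw [Matrix.trace]
  rw [Complex.re_sum]
  rw [frobSq, Finset.sum_comm]
  refine Finset.sum_congr rfl fun β _ => ?_
  rw [Matrix.diag_apply, Matrix.mul_apply, Complex.re_sum]
  refine Finset.sum_congr rfl fun α _ => ?_
  rw [Matrix.conjTranspose_apply, Complex.star_def, ← Complex.normSq_eq_conj_mul_self,
    Complex.ofReal_re]

lemma trace_mul_conj_nonneg {n p q : ℕ} (A : Matrix (Fin p) (Fin n) ℂ)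
    (B : Matrix (Fin q) (Fin n) ℂ) :
    0 ≤ (Matrix.trace ((Aᴴ * A) * (Bᴴ * B))).re := by
  have h1 : (Aᴴ * A) * (Bᴴ * B) = (Aᴴ * (A * Bᴴ)) * B := by
    simp [Matrix.mul_assoc]
  rw [h1, Matrix.trace_mul_comm]
  have h2 : B * (Aᴴ * (A * Bᴴ)) = (A * Bᴴ)ᴴ * (A * Bᴴ) := by
    simp [Matrix.conjTranspose_mul, Matrix.mul_assoc]
  rw [h2, trace_self_re]
  exact frobSq_nonneg _

def PSDW {n : ℕ} (M : Matrix (Fin n) (Fin n) ℂ) : Prop :=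
  ∃ q : ℕ, ∃ B : Matrix (Fin q) (Fin n) ℂ, M = Bᴴ * B

lemma trace_psd_nonneg {n : ℕ} {M P : Matrix (Fin n) (Fin n) ℂ}
    (hM : PSDW M) (hP : PSDW P) : 0 ≤ (Matrix.trace (M * P)).re := by
  obtain ⟨p, A, rfl⟩ := hM
  obtain ⟨q, B, rfl⟩ := hP
  exact trace_mul_conj_nonneg A B

lemma psd_self {n p : ℕ} (A : Matrix (Fin p) (Fin n) ℂ) : PSDW (Aᴴ * A) := ⟨p, A, rfl⟩

lemma psd_self' {n p : ℕ} (A : Matrix (Fin n) (Fin p) ℂ) : PSDW (A * Aᴴ) :=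
  ⟨p, Aᴴ, by rw [Matrix.conjTranspose_conjTranspose]⟩

lemma proj_sq {n m : ℕ} (W : Matrix (Fin n) (Fin m) ℂ) (hW : Wᴴ * W = 1) :
    (W * Wᴴ) * (W * Wᴴ) = W * Wᴴ := by
  rw [Matrix.mul_assoc, ← Matrix.mul_assoc Wᴴ W Wᴴ, hW, Matrix.one_mul]

lemma proj_psd {n m : ℕ} (W : Matrix (Fin n) (Fin m) ℂ) (hW : Wᴴ * W = 1) :
    PSDW ((1 : Matrix (Fin n) (Fin n) ℂ) - W * Wᴴ) := by
  refine ⟨n, 1 - W * Wᴴ, ?_⟩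
  have h1 : ((1 : Matrix (Fin n) (Fin n) ℂ) - W * Wᴴ)ᴴ = 1 - W * Wᴴ := by
    simp [Matrix.conjTranspose_sub, Matrix.conjTranspose_mul]
  rw [h1]
  have h2 : ((1 : Matrix (Fin n) (Fin n) ℂ) - W * Wᴴ) * (1 - W * Wᴴ)
      = 1 - W * Wᴴ - W * Wᴴ + (W * Wᴴ) * (W * Wᴴ) := by noncomm_ring
  rw [h2, proj_sq W hW]
  abel

lemma frobSq_mul_isometry_le {a b m : ℕ} (M : Matrix (Fin a) (Fin b) ℂ)
    (W : Matrix (Fin b) (Fin m) ℂ) (hW : Wᴴ * W = 1) :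
    frobSq (M * W) ≤ frobSq M := by
  rw [← trace_self_re, ← trace_self_re]
  have h1 : (M * W)ᴴ * (M * W) = Wᴴ * (Mᴴ * M) * W := by
    simp [Matrix.conjTranspose_mul, Matrix.mul_assoc]
  rw [h1, Matrix.trace_mul_cycle]
  have key := trace_psd_nonneg (proj_psd W hW) (psd_self M)
  have hexp : ((1 : Matrix (Fin b) (Fin b) ℂ) - W * Wᴴ) * (Mᴴ * M)
      = Mᴴ * M - W * Wᴴ * (Mᴴ * M) := by
    rw [Matrix.sub_mul, Matrix.one_mul]
  rw [hexp, Matrix.trace_sub, Complex.sub_re] at key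
  linarith

lemma trace_psd_compress_le {n m : ℕ} {P : Matrix (Fin n) (Fin n) ℂ} (hP : PSDW P)
    (W : Matrix (Fin n) (Fin m) ℂ) (hW : Wᴴ * W = 1) :
    (Matrix.trace (P * (W * Wᴴ))).re ≤ (Matrix.trace P).re := by
  have key := trace_psd_nonneg hP (proj_psd W hW)
  have hexp : P * ((1 : Matrix (Fin n) (Fin n) ℂ) - W * Wᴴ) = P - P * (W * Wᴴ) := by
    rw [Matrix.mul_sub, Matrix.mul_one]
  rw [hexp, Matrix.trace_sub, Complex.sub_re] at key
  linarith

lemma diag_psd_nonneg {n p : ℕ} (M : Matrix (Fin p) (Fin n) ℂ) (k : Fin n) :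
    0 ≤ ((Mᴴ * M) k k).re := by
  rw [Matrix.mul_apply, Complex.re_sum]
  refine Finset.sum_nonneg fun α _ => ?_
  rw [Matrix.conjTranspose_apply, Complex.star_def, ← Complex.normSq_eq_conj_mul_self,
    Complex.ofReal_re]
  exact Complex.normSq_nonneg _

lemma trace_diagonal_mul {n : ℕ} (v : Fin n → ℂ) (M : Matrix (Fin n) (Fin n) ℂ) :
    Matrix.trace (Matrix.diagonal v * M) = ∑ k, v k * M k k := by
  simp [Matrix.trace, Matrix.diag_apply, Matrix.diagonal_mul]

lemma weight_ineq {Q : ℕ} (d c : Fin Q → ℝ) (hd0 : ∀ k, 0 ≤ d k)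
    (hmono : ∀ k l : Fin Q, k ≤ l → d l ≤ d k)
    (hc0 : ∀ k, 0 ≤ c k) (hc1 : ∀ k, c k ≤ 1) (r : ℕ)
    (hsum : (Q : ℝ) - r ≤ ∑ k, c k) :
    ∑ k ∈ Finset.univ.filter (fun k : Fin Q => r ≤ (k : ℕ)), d k ^ 2
      ≤ ∑ k, d k ^ 2 * c k := by
  by_cases hrQ : r < Q
  · set ρ : Fin Q := ⟨r, hrQ⟩ with hρ
    set S₁ := Finset.univ.filter (fun k : Fin Q => (k : ℕ) < r) with hS₁
    set S₂ := Finset.univ.filter (fun k : Fin Q => r ≤ (k : ℕ)) with hS₂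
    have hcard : S₁.card = r := by
      have he : S₁ = Finset.Iio ρ := by
        ext k; simp [hS₁, Finset.mem_Iio, Fin.lt_def, hρ]
      rw [he, Fin.card_Iio]
    have hsplit : ∀ f : Fin Q → ℝ, (∑ k, f k) = ∑ k ∈ S₁, f k + ∑ k ∈ S₂, f k := by
      intro f
      rw [hS₁, hS₂,
        ← Finset.sum_filter_add_sum_filter_not Finset.univ (fun k : Fin Q => (k : ℕ) < r) f]
      congr 1
      apply Finset.sum_congr _ (fun _ _ => rfl)
      ext k; simp [not_lt]
    have hS2sum : ∑ k ∈ S₂, (1 - c k) ≤ ∑ k ∈ S₁, c k := by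
      have h1 : (∑ k : Fin Q, (1 - c k)) = (Q : ℝ) - ∑ k, c k := by
        rw [Finset.sum_sub_distrib]
        simp [Finset.card_univ]
      have h2 : (∑ k ∈ S₁, (1 - c k)) = (r : ℝ) - ∑ k ∈ S₁, c k := by
        rw [Finset.sum_sub_distrib, Finset.sum_const, hcard]
        simp
      have h3 := hsplit (fun k => 1 - c k)
      rw [h1, h2] at h3
      linarith
    have key1 : ∑ k ∈ S₂, d k ^ 2 * (1 - c k) ≤ d ρ ^ 2 * ∑ k ∈ S₂, (1 - c k) := by
      rw [Finset.mul_sum]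
      refine Finset.sum_le_sum fun k hk => ?_
      have hk' : r ≤ (k : ℕ) := by simpa [hS₂] using hk
      have hdk : d k ≤ d ρ := hmono ρ k (by rw [Fin.le_def]; exact hk')
      have hsq := pow_le_pow_left₀ (hd0 k) hdk 2
      nlinarith [hc1 k]
    have key2 : d ρ ^ 2 * ∑ k ∈ S₂, (1 - c k) ≤ d ρ ^ 2 * ∑ k ∈ S₁, c k :=
      mul_le_mul_of_nonneg_left hS2sum (sq_nonneg _)
    have key3 : d ρ ^ 2 * ∑ k ∈ S₁, c k ≤ ∑ k ∈ S₁, d k ^ 2 * c k := by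
      rw [Finset.mul_sum]
      refine Finset.sum_le_sum fun k hk => ?_
      have hk' : (k : ℕ) < r := by simpa [hS₁] using hk
      have hdk : d ρ ≤ d k := hmono k ρ (by rw [Fin.le_def]; exact Nat.le_of_lt hk')
      have hsq := pow_le_pow_left₀ (hd0 ρ) hdk 2
      nlinarith [hc0 k]
    have hfin := hsplit (fun k => d k ^ 2 * c k)
    have hS2' : ∑ k ∈ S₂, d k ^ 2
        = ∑ k ∈ S₂, d k ^ 2 * c k + ∑ k ∈ S₂, d k ^ 2 * (1 - c k) := by
      rw [← Finset.sum_add_distrib]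
      exact Finset.sum_congr rfl fun k _ => by ring
    have h0 : 0 ≤ ∑ k ∈ S₁, d k ^ 2 * c k :=
      Finset.sum_nonneg fun k _ => mul_nonneg (sq_nonneg _) (hc0 k)
    linarith
  · have hempty : Finset.univ.filter (fun k : Fin Q => r ≤ (k : ℕ)) = ∅ := by
      apply Finset.filter_eq_empty_iff.mpr
      intro k _
      simp only [not_le]
      exact lt_of_lt_of_le k.isLt (not_lt.mp hrQ)
    rw [hempty, Finset.sum_empty]
    exact Finset.sum_nonneg fun k _ => mul_nonneg (sq_nonneg _) (hc0 k)

lemma exists_kernel_isometry {D₁ D₂ : ℕ} (B : Matrix (Fin D₁) (Fin D₂) ℂ) :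
    ∃ (m : ℕ) (W : Matrix (Fin D₂) (Fin m) ℂ),
      Wᴴ * W = 1 ∧ B * W = 0 ∧ m + B.rank = D₂ := by
  classical
  set g : EuclideanSpace ℂ (Fin D₂) →ₗ[ℂ] (Fin D₁ → ℂ) :=
    B.mulVecLin ∘ₗ (WithLp.linearEquiv 2 ℂ (Fin D₂ → ℂ)).toLinearMap with hg
  set K := LinearMap.ker g with hK
  have hrange : LinearMap.range g = LinearMap.range B.mulVecLin := by
    rw [hg]
    exact LinearMap.range_comp_of_range_eq_top _ (LinearEquiv.range _)
  have hdim : Module.finrank ℂ K + B.rank = D₂ := by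
    have h1 := LinearMap.finrank_range_add_finrank_ker g
    have h2 : Module.finrank ℂ (EuclideanSpace ℂ (Fin D₂)) = D₂ := finrank_euclideanSpace_fin
    rw [hrange, h2] at h1
    rw [← hK] at h1
    rw [Matrix.rank]
    omega
  set ob := stdOrthonormalBasis ℂ K with hob
  refine ⟨Module.finrank ℂ K,
    Matrix.of (fun α j => ((ob j : K) : EuclideanSpace ℂ (Fin D₂)) α), ?_, ?_, hdim⟩
  · ext j j'
    have hinner := orthonormal_iff_ite.mp ob.orthonormal j j'
    rw [Submodule.coe_inner, PiLp.inner_apply] at hinner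
    simp only [RCLike.inner_apply] at hinner
    simp only [Matrix.mul_apply, Matrix.conjTranspose_apply, Matrix.of_apply,
      Complex.star_def, Matrix.one_apply]
    exact (Finset.sum_congr rfl fun _ _ => mul_comm _ _).trans hinner
  · ext α j
    have hmem := LinearMap.mem_ker.mp (Submodule.coe_mem (ob j))
    have h0 : B.mulVec (fun β => ((ob j : K) : EuclideanSpace ℂ (Fin D₂)) β) = 0 := by
      have h' := hmem
      rw [hg] at h'
      simp only [LinearMap.comp_apply, LinearEquiv.coe_coe, Matrix.mulVecLin_apply] at h'
      convert h' using 2 <;> rfl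
    have h1 := congrFun h0 α
    simpa [Matrix.mul_apply, Matrix.mulVec, dotProduct] using h1

lemma proj_herm_idem {n m : ℕ} (W : Matrix (Fin n) (Fin m) ℂ) (hW : Wᴴ * W = 1) :
    ((1 : Matrix (Fin n) (Fin n) ℂ) - W * Wᴴ)ᴴ * (1 - W * Wᴴ) = 1 - W * Wᴴ := by
  have h1 : ((1 : Matrix (Fin n) (Fin n) ℂ) - W * Wᴴ)ᴴ = 1 - W * Wᴴ := by
    simp [Matrix.conjTranspose_sub, Matrix.conjTranspose_mul]
  rw [h1]
  have h2 : ((1 : Matrix (Fin n) (Fin n) ℂ) - W * Wᴴ) * (1 - W * Wᴴ)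
      = 1 - W * Wᴴ - W * Wᴴ + (W * Wᴴ) * (W * Wᴴ) := by noncomm_ring
  rw [h2, proj_sq W hW]
  abel

lemma frobSq_sandwich {a b n : ℕ} (P : Matrix (Fin a) (Fin n) ℂ) (Q' : Matrix (Fin b) (Fin n) ℂ)
    (hP : Pᴴ * P = 1) (hQ : Q'ᴴ * Q' = 1) (M : Matrix (Fin n) (Fin n) ℂ) :
    frobSq (P * M * Q'ᴴ) = frobSq M := by
  rw [← trace_self_re, ← trace_self_re]
  have e1 : (P * M * Q'ᴴ)ᴴ * (P * M * Q'ᴴ) = Q' * (Mᴴ * (Pᴴ * (P * (M * Q'ᴴ)))) := by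
    simp only [Matrix.conjTranspose_mul, Matrix.conjTranspose_conjTranspose, Matrix.mul_assoc]
  have hPP : ∀ X : Matrix (Fin n) (Fin b) ℂ, Pᴴ * (P * X) = X := fun X => by
    rw [← Matrix.mul_assoc, hP, Matrix.one_mul]
  rw [e1, hPP]
  have e2 : Q' * (Mᴴ * (M * Q'ᴴ)) = (Q' * (Mᴴ * M)) * Q'ᴴ := by simp [Matrix.mul_assoc]
  rw [e2, Matrix.trace_mul_comm, ← Matrix.mul_assoc, hQ, Matrix.one_mul]

lemma frobSq_diagonal {n : ℕ} (g : Fin n → ℂ) :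
    frobSq (Matrix.diagonal g) = ∑ k, Complex.normSq (g k) := by
  rw [frobSq]
  refine Finset.sum_congr rfl fun α _ => ?_
  rw [Finset.sum_eq_single α]
  · rw [Matrix.diagonal_apply_eq]
  · intro β _ hβ
    rw [Matrix.diagonal_apply_ne _ (Ne.symm hβ)]
    simp
  · simp

lemma eym_core {D₁ D₂ Q : ℕ} (P : Matrix (Fin D₁) (Fin Q) ℂ) (Qm : Matrix (Fin D₂) (Fin Q) ℂ)
    (d : Fin Q → ℝ) (hd0 : ∀ k, 0 ≤ d k) (hmono : ∀ k l : Fin Q, k ≤ l → d l ≤ d k)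
    (hP : Pᴴ * P = 1) (hQ : Qmᴴ * Qm = 1) (r : ℕ)
    (B : Matrix (Fin D₁) (Fin D₂) ℂ) (hB : B.rank ≤ r) :
    ∑ k ∈ Finset.univ.filter (fun k : Fin Q => r ≤ (k : ℕ)), d k ^ 2
      ≤ frobSq (P * Matrix.diagonal (fun k => (d k : ℂ)) * Qmᴴ - B) := by
  obtain ⟨m, W, hW, hBW, hdim⟩ := exists_kernel_isometry B
  set Dm := Matrix.diagonal (fun k => (d k : ℂ)) with hDm
  set A := P * Dm * Qmᴴ with hA
  set D2 := Matrix.diagonal (fun k => ((d k : ℂ)) ^ 2) with hD2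
  set C := Qmᴴ * W with hC
  set c : Fin Q → ℝ := fun k => ((C * Cᴴ) k k).re with hc
  have hDH : Dmᴴ = Dm := by
    rw [hDm, Matrix.diagonal_conjTranspose]
    have hstar : (star fun k => ((d k : ℂ))) = fun k => ((d k : ℂ)) := by
      funext k
      simp only [Pi.star_apply, Complex.star_def, Complex.conj_ofReal]
    rw [hstar]
  have hPP : ∀ X : Matrix (Fin Q) (Fin D₂) ℂ, Pᴴ * (P * X) = X := fun X => by
    rw [← Matrix.mul_assoc, hP, Matrix.one_mul]
  have hDD : Dm * Dm = D2 := by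
    rw [hDm, hD2, Matrix.diagonal_mul_diagonal]
    congr 1
    funext k
    ring
  have hAHA : Aᴴ * A = Qm * D2 * Qmᴴ := by
    calc Aᴴ * A = Qm * (Dm * (Pᴴ * (P * (Dm * Qmᴴ)))) := by
          rw [hA]
          simp only [Matrix.conjTranspose_mul, Matrix.conjTranspose_conjTranspose, hDH,
            Matrix.mul_assoc]
      _ = Qm * (Dm * (Dm * Qmᴴ)) := by rw [hPP]
      _ = Qm * D2 * Qmᴴ := by
          rw [← Matrix.mul_assoc Dm, hDD, Matrix.mul_assoc]
  have h1 : frobSq ((A - B) * W) ≤ frobSq (A - B) := frobSq_mul_isometry_le _ W hW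
  have h2 : (A - B) * W = A * W := by rw [Matrix.sub_mul, hBW, sub_zero]
  have e1 : (A * W)ᴴ * (A * W) = Wᴴ * (Aᴴ * A) * W := by
    rw [Matrix.conjTranspose_mul]
    simp only [Matrix.mul_assoc]
  have hAW : frobSq (A * W) = ∑ k, d k ^ 2 * c k := by
    rw [← trace_self_re, e1, hAHA]
    have e9 : Wᴴ * (Qm * D2 * Qmᴴ) * W = (Wᴴ * Qm * D2) * (Qmᴴ * W) := by
      simp [Matrix.mul_assoc]
    rw [e9, Matrix.trace_mul_comm]
    have e10 : (Qmᴴ * W) * (Wᴴ * Qm * D2) = (C * Cᴴ) * D2 := by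
      rw [hC, Matrix.conjTranspose_mul, Matrix.conjTranspose_conjTranspose]
      simp [Matrix.mul_assoc]
    rw [e10, Matrix.trace_mul_comm, hD2, trace_diagonal_mul, Complex.re_sum]
    refine Finset.sum_congr rfl fun k _ => ?_
    rw [← Complex.ofReal_pow, Complex.re_ofReal_mul]
  have hc0 : ∀ k, 0 ≤ c k := by
    intro k
    have h := diag_psd_nonneg Cᴴ k
    rwa [Matrix.conjTranspose_conjTranspose] at h
  have hc1 : ∀ k, c k ≤ 1 := by
    intro k
    have hproj : (1 : Matrix (Fin Q) (Fin Q) ℂ) - C * Cᴴ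
        = ((1 - W * Wᴴ) * Qm)ᴴ * ((1 - W * Wᴴ) * Qm) := by
      calc (1 : Matrix (Fin Q) (Fin Q) ℂ) - C * Cᴴ
          = Qmᴴ * ((1 - W * Wᴴ) * Qm) := by
            rw [Matrix.sub_mul, Matrix.one_mul, Matrix.mul_sub, hQ, hC,
              Matrix.conjTranspose_mul, Matrix.conjTranspose_conjTranspose]
            simp [Matrix.mul_assoc]
        _ = Qmᴴ * (((1 - W * Wᴴ)ᴴ * (1 - W * Wᴴ)) * Qm) := by rw [proj_herm_idem W hW]
        _ = Qmᴴ * (1 - W * Wᴴ)ᴴ * ((1 - W * Wᴴ) * Qm) := by simp [Matrix.mul_assoc]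
        _ = ((1 - W * Wᴴ) * Qm)ᴴ * ((1 - W * Wᴴ) * Qm) := by
            rw [Matrix.conjTranspose_mul]
    have h := diag_psd_nonneg ((1 - W * Wᴴ) * Qm) k
    rw [← hproj] at h
    have he : ((1 : Matrix (Fin Q) (Fin Q) ℂ) - C * Cᴴ) k k
        = 1 - (C * Cᴴ) k k := by
      rw [Matrix.sub_apply, Matrix.one_apply_eq]
    rw [he, Complex.sub_re, Complex.one_re] at h
    rw [hc]
    linarith
  have hcsum : (Q : ℝ) - r ≤ ∑ k, c k := by
    have e2 : ∑ k, c k = (Matrix.trace (C * Cᴴ)).re := by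
      rw [Matrix.trace, Complex.re_sum]
      exact Finset.sum_congr rfl fun k _ => rfl
    have e4 : Matrix.trace (C * Cᴴ) = Matrix.trace ((Qm * Qmᴴ) * (W * Wᴴ)) := by
      have e4a : C * Cᴴ = Qmᴴ * (W * Wᴴ) * Qm := by
        rw [hC, Matrix.conjTranspose_mul, Matrix.conjTranspose_conjTranspose]
        simp [Matrix.mul_assoc]
      rw [e4a, Matrix.trace_mul_cycle]
    have e5 : (Matrix.trace (W * Wᴴ)).re = (m : ℝ) := by
      rw [Matrix.trace_mul_comm, hW, Matrix.trace_one]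
      simp
    have e6 : (Matrix.trace (((1 : Matrix (Fin D₂) (Fin D₂) ℂ) - Qm * Qmᴴ) * (W * Wᴴ))).re
        ≤ (Matrix.trace ((1 : Matrix (Fin D₂) (Fin D₂) ℂ) - Qm * Qmᴴ)).re :=
      trace_psd_compress_le (proj_psd Qm hQ) W hW
    have e7 : (Matrix.trace ((1 : Matrix (Fin D₂) (Fin D₂) ℂ) - Qm * Qmᴴ)).re
        = (D₂ : ℝ) - Q := by
      rw [Matrix.trace_sub, Matrix.trace_one, Matrix.trace_mul_comm, hQ, Matrix.trace_one]
      simp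
    have e8 : ((1 : Matrix (Fin D₂) (Fin D₂) ℂ) - Qm * Qmᴴ) * (W * Wᴴ)
        = W * Wᴴ - (Qm * Qmᴴ) * (W * Wᴴ) := by
      rw [Matrix.sub_mul, Matrix.one_mul]
    rw [e8, Matrix.trace_sub, Complex.sub_re, e7] at e6
    have hmr : (D₂ : ℝ) - r ≤ (m : ℝ) := by
      have : (m : ℝ) + (B.rank : ℝ) = (D₂ : ℝ) := by exact_mod_cast hdim
      have : (B.rank : ℝ) ≤ (r : ℝ) := by exact_mod_cast hB
      linarith
    rw [e2, e4]
    linarith [e5 ▸ e6]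
  calc ∑ k ∈ Finset.univ.filter (fun k : Fin Q => r ≤ (k : ℕ)), d k ^ 2
      ≤ ∑ k, d k ^ 2 * c k := weight_ineq d c hd0 hmono hc0 hc1 r hcsum
    _ = frobSq (A * W) := hAW.symm
    _ = frobSq ((A - B) * W) := by rw [h2]
    _ ≤ frobSq (A - B) := h1

end Matrices

end EYMAux


open Matrix EYMAux in
theorem generalized_eckart_young_aux (N : ℕ) (I : Fin N → ℕ) [∀ n, NeZero (I n)]
    (D₁ D₂ : ℕ) (X : Matrix (Fin D₁) (Fin D₂) (TS I))
    (U : Matrix (Fin D₁) (Fin (min D₁ D₂)) (TS I))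
    (V : Matrix (Fin D₂) (Fin (min D₁ D₂)) (TS I))
    (lam : Fin (min D₁ D₂) → TS I)
    (hX : X = tmul U (tmul (tdiag lam) (htrans V)))
    (hU : tmul (htrans U) U = tId (min D₁ D₂))
    (hV : tmul (htrans V) V = tId (min D₁ D₂))
    (hlam : ∀ k, TNonneg (lam k))
    (hord : ∀ k l : Fin (min D₁ D₂), k ≤ l →
      ∀ i, (tfourier (lam l) i).re ≤ (tfourier (lam k) i).re)
    (r : ℕ) (hr1 : 1 ≤ r) (hrQ : r ≤ min D₁ D₂)
    (Xhat : Matrix (Fin D₁) (Fin D₂) (TS I))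
    (hXhat : Xhat =
      tmul U (tmul (tdiag fun k => if (k : ℕ) < r then lam k else ZT) (htrans V))) :
    (∀ i, (fslice Xhat i).rank ≤ r) ∧
    (∀ Y : Matrix (Fin D₁) (Fin D₂) (TS I),
      (∀ i, (fslice Y i).rank ≤ r) →
      ∀ i, frob (fslice (X - Xhat) i) ≤ frob (fslice (X - Y) i)) := by
  constructor
  · intro i
    rw [hXhat, fslice_tmul, fslice_tmul, fslice_tdiag]
    refine le_trans (Matrix.rank_mul_le_right _ _) (le_trans (Matrix.rank_mul_le_left _ _) ?_)
    rw [Matrix.rank_diagonal]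
    have hf : ∀ k : {k : Fin (min D₁ D₂) //
        tfourier ((fun k : Fin (min D₁ D₂) => if (k : ℕ) < r then lam k else ZT) k) i ≠ 0}, (k.1 : ℕ) < r := by
      intro k
      by_contra hlt
      apply k.2
      show tfourier (if (k.1 : ℕ) < r then lam (k : Fin _) else ZT) i = 0
      rw [if_neg hlt]
      exact tfourier_ZT i
    calc Fintype.card {k : Fin (min D₁ D₂) //
          tfourier ((fun k : Fin (min D₁ D₂) => if (k : ℕ) < r then lam k else ZT) k) i ≠ 0}
        ≤ Fintype.card (Fin r) := by
          apply Fintype.card_le_of_injective (fun k => (⟨(k.1 : ℕ), hf k⟩ : Fin r))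
          intro k k' he
          simp only [Fin.mk.injEq] at he
          exact Subtype.ext (Fin.val_injective he)
      _ = r := Fintype.card_fin r
  · intro Y hY i
    set d : Fin (min D₁ D₂) → ℝ := fun k => (tfourier (lam k) i).re with hd
    have hdC : ∀ k, tfourier (lam k) i = ((d k : ℝ) : ℂ) := by
      intro k
      obtain ⟨t, ht0, hte⟩ := tnonneg_fourier (hlam k) i
      rw [hd]
      simp only [hte, Complex.ofReal_re]
    have hd0 : ∀ k, 0 ≤ d k := by
      intro k
      obtain ⟨t, ht0, hte⟩ := tnonneg_fourier (hlam k) i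
      rw [hd]
      simp only [hte, Complex.ofReal_re]
      exact ht0
    have hmono : ∀ k l : Fin (min D₁ D₂), k ≤ l → d l ≤ d k := fun k l h => hord k l h i
    have hPiso : (fslice U i)ᴴ * fslice U i = 1 := by
      rw [← fslice_htrans, ← fslice_tmul, hU, fslice_tId]
    have hQiso : (fslice V i)ᴴ * fslice V i = 1 := by
      rw [← fslice_htrans, ← fslice_tmul, hV, fslice_tId]
    have hXs : fslice X i
        = fslice U i * Matrix.diagonal (fun k => ((d k : ℝ) : ℂ)) * (fslice V i)ᴴ := by
      rw [hX, fslice_tmul, fslice_tmul, fslice_tdiag, fslice_htrans, ← Matrix.mul_assoc]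
      have he : (fun k => tfourier (lam k) i) = (fun k => ((d k : ℝ) : ℂ)) := funext hdC
      rw [he]
    have hXhats : fslice Xhat i
        = fslice U i * Matrix.diagonal
            (fun k : Fin (min D₁ D₂) => if (k : ℕ) < r then ((d k : ℝ) : ℂ) else 0)
          * (fslice V i)ᴴ := by
      rw [hXhat, fslice_tmul, fslice_tmul, fslice_tdiag, fslice_htrans, ← Matrix.mul_assoc]
      have he : (fun k : Fin (min D₁ D₂) => tfourier (if (k : ℕ) < r then lam k else ZT) i)
          = (fun k : Fin (min D₁ D₂) => if (k : ℕ) < r then ((d k : ℝ) : ℂ) else 0) := by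
        funext k
        by_cases h : (k : ℕ) < r
        · rw [if_pos h, if_pos h]
          exact hdC k
        · rw [if_neg h, if_neg h]
          exact tfourier_ZT i
      rw [he]
    have hdiff : fslice (X - Xhat) i
        = fslice U i * Matrix.diagonal
            (fun k : Fin (min D₁ D₂) => if (k : ℕ) < r then 0 else ((d k : ℝ) : ℂ))
          * (fslice V i)ᴴ := by
      rw [fslice_sub, hXs, hXhats, ← Matrix.sub_mul, ← Matrix.mul_sub, Matrix.diagonal_sub]
      have he : (fun k : Fin (min D₁ D₂) =>
            ((d k : ℝ) : ℂ) - (if (k : ℕ) < r then ((d k : ℝ) : ℂ) else 0))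
          = (fun k : Fin (min D₁ D₂) => if (k : ℕ) < r then 0 else ((d k : ℝ) : ℂ)) := by
        funext k
        by_cases h : (k : ℕ) < r
        · rw [if_pos h, if_pos h]
          ring
        · rw [if_neg h, if_neg h]
          ring
      rw [he]
    have hL : frobSq (fslice (X - Xhat) i)
        = ∑ k ∈ Finset.univ.filter (fun k : Fin (min D₁ D₂) => r ≤ (k : ℕ)), d k ^ 2 := by
      rw [hdiff, frobSq_sandwich _ _ hPiso hQiso, frobSq_diagonal]
      rw [Finset.sum_filter]
      refine Finset.sum_congr rfl fun k _ => ?_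
      by_cases h : (k : ℕ) < r
      · rw [if_pos h, if_neg (not_le.mpr h)]
        simp
      · rw [if_neg h, if_pos (not_lt.mp h)]
        rw [Complex.normSq_ofReal]
        ring
    have hkey := eym_core (fslice U i) (fslice V i) d hd0 hmono hPiso hQiso r
      (fslice Y i) (hY i)
    have hXY : fslice (X - Y) i
        = fslice U i * Matrix.diagonal (fun k => ((d k : ℝ) : ℂ)) * (fslice V i)ᴴ
          - fslice Y i := by
      rw [fslice_sub, hXs]
    rw [frob_eq, frob_eq]
    apply Real.sqrt_le_sqrt
    rw [hL, hXY]
    exact hkey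

/-- generalized Eckart–Young–Mirsky theorem.  The rank-`r` TSVD
truncation `X̂` has rank at most `r·E_T` and is a best approximation to `X`, in the
generalized Frobenius norm, among all t-matrices of rank at most `r·E_T` (rank and
norm being compared Fourier-sliceswise, which is the partial order on nonnegative
t-scalars). -/
theorem generalized_eckart_young (N : ℕ) (I : Fin N → ℕ) [∀ n, NeZero (I n)]
    (D₁ D₂ : ℕ) (X : Matrix (Fin D₁) (Fin D₂) (TS I))
    (U : Matrix (Fin D₁) (Fin (min D₁ D₂)) (TS I))
    (V : Matrix (Fin D₂) (Fin (min D₁ D₂)) (TS I))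
    (lam : Fin (min D₁ D₂) → TS I)
    (hX : X = tmul U (tmul (tdiag lam) (htrans V)))
    (hU : tmul (htrans U) U = tId (min D₁ D₂))
    (hV : tmul (htrans V) V = tId (min D₁ D₂))
    (hlam : ∀ k, TNonneg (lam k))
    (hord : ∀ k l : Fin (min D₁ D₂), k ≤ l →
      ∀ i, (tfourier (lam l) i).re ≤ (tfourier (lam k) i).re)
    (r : ℕ) (hr1 : 1 ≤ r) (hrQ : r ≤ min D₁ D₂)
    (Xhat : Matrix (Fin D₁) (Fin D₂) (TS I))
    (hXhat : Xhat =
      tmul U (tmul (tdiag fun k => if (k : ℕ) < r then lam k else ZT) (htrans V))) :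
    (∀ i, (fslice Xhat i).rank ≤ r) ∧
    (∀ Y : Matrix (Fin D₁) (Fin D₂) (TS I),
      (∀ i, (fslice Y i).rank ≤ r) →
      ∀ i, frob (fslice (X - Xhat) i) ≤ frob (fslice (X - Y) i)) := by
  open Matrix EYMAux in
  exact generalized_eckart_young_aux N I D₁ D₂ X U V lam hX hU hV hlam hord r hr1 hrQ Xhat hXhat
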